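/- Let z₁, …, z_N be distinct complex numbers with N ≥ 2. Then Σ_{k=1}^{N} z_k^{N−n}·(Σ_{j≠k} z_j) / ∏_{j≠k}(z_k − z_j) = −δ_{n,2} for n = 1, …, N; i.e., the sum equals −1 when n = 2 and 0 otherwise. -/

import Mathlib

open Polynomial

lemma coeff_basis_aux (N : ℕ) (z : Fin N → ℂ) (k : Fin N) (hN2 : 2 ≤ N) :
    (Lagrange.basis Finset.univ z k).coeff (N - 2)
      = (∏ j ∈ Finset.univ.erase k, (z k - z j))⁻¹
        * (-(∑ j ∈ Finset.univ.erase k, z j)) := by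
  have hcard : (Finset.univ.erase k).card = N - 1 := by
    simp [Finset.card_erase_of_mem]
  rw [Lagrange.basis]
  simp_rw [Lagrange.basisDivisor]
  rw [Finset.prod_mul_distrib, ← map_prod, coeff_C_mul]
  have hprod : (∏ j ∈ Finset.univ.erase k, (X - C (z j)))
      = (((Finset.univ.erase k).val.map z).map fun t => X - C t).prod := by
    rw [Multiset.map_map]
    rfl
  have hle : N - 2 ≤ Multiset.card ((Finset.univ.erase k).val.map z) := by
    simp [hcard]; omega
  rw [hprod, Multiset.prod_X_sub_C_coeff _ hle]
  have hcard' : Multiset.card ((Finset.univ.erase k).val.map z) = N - 1 := by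
    simp [hcard]
  rw [hcard']
  have h1 : N - 1 - (N - 2) = 1 := by omega
  rw [h1]
  have : ((Finset.univ.erase k).val.map z).esymm 1 = ∑ j ∈ Finset.univ.erase k, z j := by
    rw [Finset.esymm_map_val, Finset.powersetCard_one]
    rw [Finset.sum_map]
    simp
  rw [this]
  have : ∏ j ∈ Finset.univ.erase k, (z k - z j)⁻¹
      = (∏ j ∈ Finset.univ.erase k, (z k - z j))⁻¹ := by
    rw [← Finset.prod_inv_distrib]
  rw [this]
  ring

/-- For distinct `z₁,…,z_N` (`N ≥ 2`) and `1 ≤ n ≤ N`,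
`Σ_k z_k^{N−n}·(Σ_{j≠k} z_j) / ∏_{j≠k}(z_k − z_j) = −δ_{n,2}`. -/
theorem lagrange_second_identity (N : ℕ) (hN2 : 2 ≤ N) (z : Fin N → ℂ)
    (hz : Function.Injective z) (n : ℕ) (h1 : 1 ≤ n) (hN : n ≤ N) :
    ∑ k, z k ^ (N - n) * (∑ j ∈ Finset.univ.erase k, z j)
        / ∏ j ∈ Finset.univ.erase k, (z k - z j)
      = if n = 2 then -1 else 0 := by
  have hinj : Set.InjOn z (Finset.univ : Finset (Fin N)) := hz.injOn
  have hdeg : ((X : ℂ[X]) ^ (N - n)).degree < (Finset.univ : Finset (Fin N)).card := by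
    rw [degree_X_pow]
    simp only [Finset.card_univ, Fintype.card_fin]
    exact_mod_cast (by omega : N - n < N)
  have key := Lagrange.eq_interpolate (v := z) hinj hdeg
  have hc := congrArg (fun p => Polynomial.coeff p (N - 2)) key
  simp only [Lagrange.interpolate_apply, finset_sum_coeff, coeff_C_mul, eval_pow, eval_X,
    coeff_X_pow] at hc
  rw [Finset.sum_congr rfl (fun k _ => by rw [coeff_basis_aux N z k hN2])] at hc
  have hiff : (N - 2 = N - n) ↔ (n = 2) := by omega
  calc ∑ k, z k ^ (N - n) * (∑ j ∈ Finset.univ.erase k, z j)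
        / ∏ j ∈ Finset.univ.erase k, (z k - z j)
      = -∑ k, z k ^ (N - n) * ((∏ j ∈ Finset.univ.erase k, (z k - z j))⁻¹
          * (-(∑ j ∈ Finset.univ.erase k, z j))) := by
        rw [← Finset.sum_neg_distrib]
        refine Finset.sum_congr rfl fun k _ => ?_
        field_simp
    _ = -(if N - 2 = N - n then (1:ℂ) else 0) := by rw [hc]
    _ = if n = 2 then -1 else 0 := by
        simp only [hiff]
        split <;> simp
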